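/- For every natural number n ≥ 1, the Littlestone dimension of the universal class U_n equals ⌊log₂ n⌋, where U_n = {h_1, …, h_n} over domain X_n = {0,1}^n with h_i(x) = x_i (the i-th coordinate of x). -/

import Mathlib

/-- `Shatters H d` : the class `H` shatters some perfect binary mistake tree of depth `d`
(Littlestone shattering, in its standard inductive form). -/
inductive Shatters {X : Type*} : Set (X → Bool) → ℕ → Prop
  | zero (H : Set (X → Bool)) (hne : H.Nonempty) : Shatters H 0
  | succ (H : Set (X → Bool)) (d : ℕ) (x : X)
      (h0 : Shatters {h ∈ H | h x = false} d)
      (h1 : Shatters {h ∈ H | h x = true} d) : Shatters H (d + 1)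

def Hset (n : ℕ) (S : Finset (Fin n)) : Set ((Fin n → Bool) → Bool) :=
  {h | ∃ i ∈ S, h = fun x => x i}

lemma Hset_filter (n : ℕ) (S : Finset (Fin n)) (x : Fin n → Bool) (b : Bool) :
    {h ∈ Hset n S | h x = b} = Hset n (S.filter fun i => x i = b) := by
  ext h
  simp only [Hset, Set.mem_setOf_eq, Finset.mem_filter]
  constructor
  · rintro ⟨⟨i, hi, rfl⟩, hb⟩
    exact ⟨i, ⟨hi, hb⟩, rfl⟩
  · rintro ⟨i, ⟨hi, hb⟩, rfl⟩
    exact ⟨⟨i, hi, rfl⟩, hb⟩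

lemma shatters_upper (n : ℕ) : ∀ d (S : Finset (Fin n)),
    Shatters (Hset n S) d → 2 ^ d ≤ S.card := by
  intro d
  induction d with
  | zero =>
    intro S h
    cases h with
    | zero _ hne =>
      obtain ⟨h, i, hi, _⟩ := hne
      simpa using Finset.card_pos.mpr ⟨i, hi⟩
  | succ d ih =>
    intro S h
    cases h with
    | succ _ _ x h0 h1 =>
      rw [Hset_filter] at h0 h1
      have c0 := ih _ h0
      have c1 := ih _ h1
      have : (S.filter fun i => x i = false).card + (S.filter fun i => x i = true).card = S.card := by
        have := Finset.card_filter_add_card_filter_not (s := S)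
          (p := fun i => x i = true)
        simp only [Bool.not_eq_true] at this
        omega
      omega

lemma shatters_lower (n : ℕ) : ∀ d (S : Finset (Fin n)),
    2 ^ d ≤ S.card → Shatters (Hset n S) d := by
  intro d
  induction d with
  | zero =>
    intro S h
    have : S.Nonempty := Finset.card_pos.mp (by omega)
    obtain ⟨i, hi⟩ := this
    exact Shatters.zero _ ⟨_, i, hi, rfl⟩
  | succ d ih =>
    intro S h
    obtain ⟨T, hTS, hTc⟩ := Finset.exists_subset_card_eq (show 2 ^ d ≤ S.card by
      calc 2 ^ d ≤ 2 ^ (d+1) := Nat.pow_le_pow_right (by norm_num) (by omega)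
        _ ≤ S.card := h)
    set x : Fin n → Bool := fun i => decide (i ∈ T) with hx
    refine Shatters.succ _ d x ?_ ?_
    · rw [Hset_filter]
      apply ih
      have : (S.filter fun i => x i = false) = S \ T := by
        ext i; simp [hx, Finset.mem_sdiff]
      rw [this]
      have := Finset.card_sdiff_of_subset hTS
      rw [this, hTc]
      have := Nat.pow_succ 2 d
      omega
    · rw [Hset_filter]
      apply ih
      have : (S.filter fun i => x i = true) = T := by
        ext i
        simp only [Finset.mem_filter, hx, decide_eq_true_eq]
        exact ⟨fun ⟨_, h⟩ => h, fun h => ⟨hTS h, h⟩⟩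
      rw [this, hTc]

theorem universal_class_littlestone (n : ℕ) (hn : 1 ≤ n) :
    IsGreatest {d : ℕ |
      Shatters {h : (Fin n → Bool) → Bool | ∃ i : Fin n, h = fun x => x i} d}
      (Nat.log 2 n) := by
  have huniv : {h : (Fin n → Bool) → Bool | ∃ i : Fin n, h = fun x => x i} =
      Hset n Finset.univ := by
    ext h; simp [Hset]
  constructor
  · show Shatters _ _
    rw [huniv]
    apply shatters_lower
    simpa using Nat.pow_log_le_self 2 (by omega : n ≠ 0)
  · intro d hd
    rw [Set.mem_setOf_eq, huniv] at hd
    have := shatters_upper n d _ hd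
    simp only [Finset.card_univ, Fintype.card_fin] at this
    exact (Nat.le_log_iff_pow_le (by norm_num) (by omega)).mpr this
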